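/- Let n ≥ 1 and let F : ℝ^{2n} → ℝ be smooth and everywhere positive. Set u = F² and f = −2 ln F (so u = e^{−f}). Then for every x ∈ ℝ^{2n}: u(x)·P_f(x)(∇f(x)) = 4·P_F(x)(∇F(x)) + [ −(1/4)|∇f(x)|⁴ + (1/2)|∇f(x)|²·Δf(x) + D²f(x)[∇f(x), ∇f(x)] ]·u(x). -/

import Mathlib

open MeasureTheory
open scoped RealInnerProductSpace

noncomputable section

/-- `ℝ^{2n}` identified with `ℂⁿ`: the `2n` real coordinates are indexed by pairs
`(a, t)` where `a` numbers the complex component and `t ∈ {0,1}` the real and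
imaginary part of that component. -/
abbrev Cn (n : ℕ) := EuclideanSpace ℝ (Fin n × Fin 2)

/-- The complex structure `J` on `ℝ^{2n} = ℂⁿ`, componentwise multiplication by `i`. -/
def Jop (n : ℕ) (x : Cn n) : Cn n :=
  WithLp.toLp 2 (fun p : Fin n × Fin 2 => ![ -x (p.1, 1), x (p.1, 0) ] p.2)

/-- The standard orthonormal basis of `ℝ^{2n}`. -/
def eC (n : ℕ) (p : Fin n × Fin 2) : Cn n := EuclideanSpace.single p 1

/-- Second Fréchet derivative as a bilinear form. -/
def D2C (n : ℕ) (g : Cn n → ℝ) (x X Y : Cn n) : ℝ := iteratedFDeriv ℝ 2 g x ![X, Y]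

/-- Third Fréchet derivative as a trilinear form. -/
def D3C (n : ℕ) (g : Cn n → ℝ) (x Z X Y : Cn n) : ℝ := iteratedFDeriv ℝ 3 g x ![Z, X, Y]

/-- Fourth Fréchet derivative as a quadrilinear form. -/
def D4C (n : ℕ) (g : Cn n → ℝ) (x Z X Y W : Cn n) : ℝ :=
  iteratedFDeriv ℝ 4 g x ![Z, X, Y, W]

/-- The Laplacian `Δg(x) = Σ_a D²g(x)[e_a, e_a]`. -/
def lapC (n : ℕ) (g : Cn n → ℝ) (x : Cn n) : ℝ := ∑ p, D2C n g x (eC n p) (eC n p)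

/-- The flat CR P-form
`P_g(x)(Z) = Σ_b D³g(x)[Z,e_b,e_b] + Σ_b D³g(x)[J Z, e_b, J e_b]`. -/
def PC (n : ℕ) (g : Cn n → ℝ) (x Z : Cn n) : ℝ :=
  (∑ b, D3C n g x Z (eC n b) (eC n b)) +
    ∑ b, D3C n g x (Jop n Z) (eC n b) (Jop n (eC n b))

/-- The flat CR-Paneitz operator
`C(g)(x) = Σ_{a,b} D⁴g[e_a,e_a,e_b,e_b] + Σ_{a,b} D⁴g[e_a, J e_a, e_b, J e_b]`. -/
def CPaneitz (n : ℕ) (g : Cn n → ℝ) (x : Cn n) : ℝ :=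
  (∑ a, ∑ b, D4C n g x (eC n a) (eC n a) (eC n b) (eC n b)) +
    ∑ a, ∑ b, D4C n g x (eC n a) (Jop n (eC n a)) (eC n b) (Jop n (eC n b))

/-- The unit cube `[0,1]^{2n}`. -/
def cubeC (n : ℕ) : Set (Cn n) := {x | ∀ p, x p ∈ Set.Icc (0 : ℝ) 1}

/-- The vector of `ℤ^{2n} ⊂ ℝ^{2n}` with integer coordinates `k`. -/
def lattC (n : ℕ) (k : Fin n × Fin 2 → ℤ) : Cn n := WithLp.toLp 2 (fun p => (k p : ℝ))

namespace CRaux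
variable {n : ℕ}

/-- first derivative in direction `X` as a function of the base point -/
def dF1 (n : ℕ) (F : Cn n → ℝ) (X : Cn n) : Cn n → ℝ := fun y => fderiv ℝ F y X
def dF2 (n : ℕ) (F : Cn n → ℝ) (X Y : Cn n) : Cn n → ℝ := fun y => fderiv ℝ (dF1 n F Y) y X
def dF3 (n : ℕ) (F : Cn n → ℝ) (Z X Y x : Cn n) : ℝ := fderiv ℝ (dF2 n F X Y) x Z

lemma eC_sum (n : ℕ) (v : Cn n) : ∑ p, v p • eC n p = v := by
  ext q
  rw [WithLp.ofLp_sum, Finset.sum_apply]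
  simp [eC, EuclideanSpace.single_apply]

lemma eCJ_sum (n : ℕ) (v : Cn n) : ∑ p, v p • Jop n (eC n p) = Jop n v := by
  ext q
  rw [WithLp.ofLp_sum, Finset.sum_apply]
  rcases q with ⟨a, t⟩
  fin_cases t <;>
    simp [Jop, eC, EuclideanSpace.single_apply, Fintype.sum_prod_type, Fin.sum_univ_two,
      Prod.ext_iff]

lemma Jop_smul (n : ℕ) (c : ℝ) (v : Cn n) : Jop n (c • v) = c • Jop n v := by
  ext q
  rcases q with ⟨a, t⟩
  fin_cases t <;> simp [Jop]

lemma inner_eC (n : ℕ) (v : Cn n) (p : Fin n × Fin 2) : ⟪v, eC n p⟫ = v p := by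
  simp [eC, real_inner_comm, EuclideanSpace.inner_single_left, EuclideanSpace.inner_single_right]

lemma inner_JeC (n : ℕ) (v : Cn n) (b : Fin n × Fin 2) :
    ⟪v, Jop n (eC n b)⟫ = -(Jop n v) b := by
  rcases b with ⟨a, t⟩
  fin_cases t <;>
    simp [Jop, eC, PiLp.inner_apply, EuclideanSpace.single_apply, Fintype.sum_prod_type,
      Fin.sum_univ_two, Prod.ext_iff]

lemma inner_J_self (n : ℕ) (v : Cn n) : ⟪v, Jop n v⟫ = 0 := by
  simp only [PiLp.inner_apply, RCLike.inner_apply, conj_trivial, Fintype.sum_prod_type,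
    Fin.sum_univ_two]
  have h : ∀ a : Fin n, v (a,0) * Jop n v (a,0) + v (a,1) * Jop n v (a,1) = 0 := by
    intro a; simp [Jop]; ring
  exact Finset.sum_eq_zero fun a _ => by rw [← h a]; ring

lemma clm_expand (L : Cn n →L[ℝ] ℝ) (v : Cn n) : ∑ p, v p * L (eC n p) = L v := by
  conv_rhs => rw [← eC_sum n v]
  rw [map_sum]
  simp

lemma clm_expand_J (L : Cn n →L[ℝ] ℝ) (v : Cn n) :
    ∑ p, v p * L (Jop n (eC n p)) = L (Jop n v) := by
  conv_rhs => rw [← eCJ_sum n v]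
  rw [map_sum]
  simp

lemma inner_grad (g : Cn n → ℝ) (x v : Cn n) : ⟪gradient g x, v⟫ = fderiv ℝ g x v := by
  simp [gradient, InnerProductSpace.toDual_symm_apply]


lemma le_infty' (m : ℕ) : (m : WithTop ℕ∞) ≤ ((⊤:ℕ∞) : WithTop ℕ∞) :=
  ENat.natCast_le_of_coe_top_le_withTop le_rfl m

lemma contDiff_dF1 {F : Cn n → ℝ} (hF : ContDiff ℝ (⊤:ℕ∞) F) (X : Cn n) :
    ContDiff ℝ (⊤:ℕ∞) (dF1 n F X) :=
  (hF.fderiv_right (by simp)).clm_apply contDiff_const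

lemma contDiff_dF2 {F : Cn n → ℝ} (hF : ContDiff ℝ (⊤:ℕ∞) F) (X Y : Cn n) :
    ContDiff ℝ (⊤:ℕ∞) (dF2 n F X Y) :=
  ((contDiff_dF1 hF Y).fderiv_right (by simp)).clm_apply contDiff_const

lemma D2C_eq {g : Cn n → ℝ} (hg : ContDiff ℝ (⊤:ℕ∞) g) (x X Y : Cn n) :
    D2C n g x X Y = dF2 n g X Y x := by
  have hd : DifferentiableAt ℝ (fderiv ℝ g) x :=
    ((hg.fderiv_right (m := ((⊤:ℕ∞) : WithTop ℕ∞)) (by simp)).differentiable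
      (by simp)) x
  rw [D2C, iteratedFDeriv_two_apply]
  show fderiv ℝ (fderiv ℝ g) x (![X,Y] 0) (![X,Y] 1) = fderiv ℝ (fun y => fderiv ℝ g y Y) x X
  rw [fderiv_clm_apply hd (differentiableAt_const Y)]
  simp

lemma D3C_eq {g : Cn n → ℝ} (hg : ContDiff ℝ (⊤:ℕ∞) g) (x Z X Y : Cn n) :
    D3C n g x Z X Y = dF3 n g Z X Y x := by
  have hdiff : DifferentiableAt ℝ (iteratedFDeriv ℝ 2 g) x :=
    ((hg.iteratedFDeriv_right (m := (1:ℕ)) (i := 2)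
      (by exact_mod_cast le_infty' 3)).differentiable (by simp)) x
  have h2 : (fun y => iteratedFDeriv ℝ 2 g y ![X, Y]) = dF2 n g X Y := by
    funext y
    exact D2C_eq hg y X Y
  rw [D3C, iteratedFDeriv_succ_apply_left]
  have ht : Fin.tail (![Z, X, Y] : Fin 3 → Cn n) = ![X, Y] := rfl
  rw [ht]
  have := fderiv_continuousMultilinear_apply_const_apply hdiff (![X,Y] : Fin 2 → Cn n) Z
  rw [show (![Z,X,Y] : Fin 3 → Cn n) 0 = Z from rfl, ← this]
  rw [dF3, ← h2]


section chain
variable {F : Cn n → ℝ}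

lemma diff_F (hF : ContDiff ℝ (⊤:ℕ∞) F) : Differentiable ℝ F :=
  hF.differentiable (by simp)

lemma diff_dF1 (hF : ContDiff ℝ (⊤:ℕ∞) F) (X : Cn n) : Differentiable ℝ (dF1 n F X) :=
  (contDiff_dF1 hF X).differentiable (by simp)

lemma diff_dF2 (hF : ContDiff ℝ (⊤:ℕ∞) F) (X Y : Cn n) : Differentiable ℝ (dF2 n F X Y) :=
  (contDiff_dF2 hF X Y).differentiable (by simp)

lemma dF2_fderiv2 {g : Cn n → ℝ} (hg : ContDiff ℝ (⊤:ℕ∞) g) (x X Y : Cn n) :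
    dF2 n g X Y x = fderiv ℝ (fderiv ℝ g) x X Y := by
  have hd : DifferentiableAt ℝ (fderiv ℝ g) x :=
    ((hg.fderiv_right (m := ((⊤:ℕ∞) : WithTop ℕ∞)) (by simp)).differentiable
      (by simp)) x
  show fderiv ℝ (fun y => fderiv ℝ g y Y) x X = _
  rw [fderiv_clm_apply hd (differentiableAt_const Y)]
  simp

lemma dF2_symm {g : Cn n → ℝ} (hg : ContDiff ℝ (⊤:ℕ∞) g) (x X Y : Cn n) :
    dF2 n g X Y x = dF2 n g Y X x := by
  rw [dF2_fderiv2 hg, dF2_fderiv2 hg]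
  exact (hg.contDiffAt.isSymmSndFDerivAt (by simpa using le_infty' 2)) X Y

lemma hinv_hasFDeriv (hF : ContDiff ℝ (⊤:ℕ∞) F) (hFpos : ∀ x, 0 < F x) (x : Cn n) :
    HasFDerivAt (fun y => (F y)⁻¹) ((-((F x)^2)⁻¹) • fderiv ℝ F x) x :=
  (hasDerivAt_inv (hFpos x).ne').comp_hasFDerivAt x ((diff_F hF) x).hasFDerivAt

lemma hf1fun (hF : ContDiff ℝ (⊤:ℕ∞) F) (hFpos : ∀ x, 0 < F x) (X : Cn n) :
    dF1 n (fun y => -2 * Real.log (F y)) X = fun y => -2 * ((F y)⁻¹ * dF1 n F X y) := by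
  funext y
  have h := (((diff_F hF) y).hasFDerivAt.log (hFpos y).ne').const_mul (-2:ℝ)
  show fderiv ℝ (fun y => -2 * Real.log (F y)) y X = _
  rw [h.fderiv]
  simp [dF1]

lemma hf2pt (hF : ContDiff ℝ (⊤:ℕ∞) F) (hFpos : ∀ x, 0 < F x) (x X Y : Cn n) :
    dF2 n (fun y => -2 * Real.log (F y)) X Y x
      = -2 * ((F x)⁻¹ * dF2 n F X Y x)
        + 2 * ((F x)⁻¹ * (F x)⁻¹ * (dF1 n F X x * dF1 n F Y x)) := by
  have hinv := hinv_hasFDeriv hF hFpos x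
  have hG : HasFDerivAt (dF1 n F Y) (fderiv ℝ (dF1 n F Y) x) x :=
    ((diff_dF1 hF Y) x).hasFDerivAt
  have h := (hinv.mul hG).const_mul (-2:ℝ)
  have e1 : dF2 n (fun y => -2 * Real.log (F y)) X Y x
      = fderiv ℝ (fun y => -2 * ((F y)⁻¹ * dF1 n F Y y)) x X := by
    show fderiv ℝ (dF1 n (fun y => -2 * Real.log (F y)) Y) x X = _
    rw [hf1fun hF hFpos Y]
  rw [e1, HasFDerivAt.fderiv (f := fun y => -2 * ((F y)⁻¹ * dF1 n F Y y)) h]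
  simp only [ContinuousLinearMap.add_apply, ContinuousLinearMap.smul_apply, smul_eq_mul]
  simp only [show fderiv ℝ (dF1 n F Y) x X = dF2 n F X Y x from rfl,
    show fderiv ℝ F x X = dF1 n F X x from rfl]
  rw [sq, mul_inv]
  ring

lemma hf3pt (hF : ContDiff ℝ (⊤:ℕ∞) F) (hFpos : ∀ x, 0 < F x) (x Z X Y : Cn n) :
    dF3 n (fun y => -2 * Real.log (F y)) Z X Y x
      = -2 * ((F x)⁻¹ * dF3 n F Z X Y x)
        + 2 * ((F x)⁻¹ * (F x)⁻¹ * (dF1 n F Z x * dF2 n F X Y x))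
        + 2 * ((F x)⁻¹ * (F x)⁻¹ * (dF2 n F Z X x * dF1 n F Y x
            + dF1 n F X x * dF2 n F Z Y x))
        - 4 * ((F x)⁻¹ * (F x)⁻¹ * (F x)⁻¹
            * (dF1 n F X x * dF1 n F Y x * dF1 n F Z x)) := by
  have hinv := hinv_hasFDeriv hF hFpos x
  have h1 := (hinv.mul ((diff_dF2 hF X Y) x).hasFDerivAt).const_mul (-2:ℝ)
  have h2 := ((hinv.mul hinv).mul
      (((diff_dF1 hF X) x).hasFDerivAt.mul ((diff_dF1 hF Y) x).hasFDerivAt)).const_mul (2:ℝ)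
  have h := h1.add h2
  have e2 : dF3 n (fun y => -2 * Real.log (F y)) Z X Y x
      = fderiv ℝ (fun y => -2 * ((F y)⁻¹ * dF2 n F X Y y)
          + 2 * ((F y)⁻¹ * (F y)⁻¹ * (dF1 n F X y * dF1 n F Y y))) x Z := by
    show fderiv ℝ (dF2 n (fun y => -2 * Real.log (F y)) X Y) x Z = _
    rw [show dF2 n (fun y => -2 * Real.log (F y)) X Y
        = (fun y => -2 * ((F y)⁻¹ * dF2 n F X Y y)
            + 2 * ((F y)⁻¹ * (F y)⁻¹ * (dF1 n F X y * dF1 n F Y y)))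
      from funext fun y => hf2pt hF hFpos y X Y]
  rw [e2, HasFDerivAt.fderiv (f := fun y => -2 * ((F y)⁻¹ * dF2 n F X Y y)
            + 2 * ((F y)⁻¹ * (F y)⁻¹ * (dF1 n F X y * dF1 n F Y y))) h]
  simp only [ContinuousLinearMap.add_apply, ContinuousLinearMap.smul_apply, smul_eq_mul,
    Pi.mul_apply]
  simp only [show fderiv ℝ (dF2 n F X Y) x Z = dF3 n F Z X Y x from rfl,
    show fderiv ℝ (dF1 n F Y) x Z = dF2 n F Z Y x from rfl,
    show fderiv ℝ (dF1 n F X) x Z = dF2 n F Z X x from rfl,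
    show fderiv ℝ F x Z = dF1 n F Z x from rfl]
  rw [sq, mul_inv]
  ring

end chain
end CRaux

set_option maxHeartbeats 2000000

/-- CR change-of-variable identity for the P-function,
`u·P_f(∇f) = 4 P_F(∇F) + [ −¼|∇f|⁴ + ½|∇f|²Δf + ∇²f(∇f,∇f) ]·u`
where `u = F²`, `f = −2 ln F`. -/
theorem cr_P_change_of_variable (n : ℕ) (hn : 1 ≤ n) (F : Cn n → ℝ)
    (hF : ContDiff ℝ (⊤ : ℕ∞) F) (hFpos : ∀ x, 0 < F x)
    (u f : Cn n → ℝ) (hu : u = fun x => (F x) ^ 2)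
    (hf : f = fun x => -2 * Real.log (F x)) (x : Cn n) :
    u x * PC n f x (gradient f x) =
      4 * PC n F x (gradient F x)
      + (-(1 / 4) * ‖gradient f x‖ ^ 4 + (1 / 2) * ‖gradient f x‖ ^ 2 * lapC n f x
          + D2C n f x (gradient f x) (gradient f x)) * u x := by
  simp only [hu, hf]
  set fl : Cn n → ℝ := fun y => -2 * Real.log (F y) with hfl
  set c : ℝ := F x with hc
  have hcne : c ≠ 0 := (hFpos x).ne'
  set G : Cn n := gradient F x with hGdef
  set s : ℝ := -2 * c⁻¹ with hs
  have hfc : ContDiff ℝ (⊤:ℕ∞) fl := by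
    rw [hfl]; exact contDiff_const.mul (hF.log fun y => (hFpos y).ne')
  -- chain rule formulas specialized to fl
  have hf2'' : ∀ (y X Y : Cn n), CRaux.dF2 n fl X Y y
      = -2 * ((F y)⁻¹ * CRaux.dF2 n F X Y y)
        + 2 * ((F y)⁻¹ * (F y)⁻¹ * (CRaux.dF1 n F X y * CRaux.dF1 n F Y y)) := by
    rw [hfl]; exact fun y X Y => CRaux.hf2pt hF hFpos y X Y
  have hf3'' : ∀ (y Z X Y : Cn n), CRaux.dF3 n fl Z X Y y
      = -2 * ((F y)⁻¹ * CRaux.dF3 n F Z X Y y)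
        + 2 * ((F y)⁻¹ * (F y)⁻¹ * (CRaux.dF1 n F Z y * CRaux.dF2 n F X Y y))
        + 2 * ((F y)⁻¹ * (F y)⁻¹ * (CRaux.dF2 n F Z X y * CRaux.dF1 n F Y y
            + CRaux.dF1 n F X y * CRaux.dF2 n F Z Y y))
        - 4 * ((F y)⁻¹ * (F y)⁻¹ * (F y)⁻¹
            * (CRaux.dF1 n F X y * CRaux.dF1 n F Y y * CRaux.dF1 n F Z y)) := by
    rw [hfl]; exact fun y Z X Y => CRaux.hf3pt hF hFpos y Z X Y
  -- gradient of fl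
  have hgradf : gradient fl x = s • G := by
    have hdf : HasFDerivAt fl ((-2:ℝ) • ((F x)⁻¹ • fderiv ℝ F x)) x := by
      rw [hfl]
      exact (((CRaux.diff_F hF) x).hasFDerivAt.log (hFpos x).ne').const_mul (-2:ℝ)
    have e0 : gradient fl x = (InnerProductSpace.toDual ℝ (Cn n)).symm (fderiv ℝ fl x) := rfl
    rw [e0, hdf.fderiv, (InnerProductSpace.toDual ℝ (Cn n)).symm.map_smul,
      (InnerProductSpace.toDual ℝ (Cn n)).symm.map_smul, smul_smul, hs]
    rfl
  -- basic gradient facts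
  have hG1 : ∀ v : Cn n, CRaux.dF1 n F v x = ⟪G, v⟫ := fun v => (CRaux.inner_grad F x v).symm
  have hGe : ∀ b, CRaux.dF1 n F (eC n b) x = G b := fun b => by
    rw [hG1 (eC n b), CRaux.inner_eC]
  have hGJe : ∀ b, CRaux.dF1 n F (Jop n (eC n b)) x = -(Jop n G) b := fun b => by
    rw [hG1 (Jop n (eC n b)), CRaux.inner_JeC]
  have hGJG : CRaux.dF1 n F (Jop n G) x = 0 := by
    rw [hG1 (Jop n G), CRaux.inner_J_self]
  -- contraction lemmas
  have hcon : ∀ v W : Cn n, (∑ b, v b * CRaux.dF2 n F (eC n b) W x) = CRaux.dF2 n F v W x :=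
    fun v W => CRaux.clm_expand (fderiv ℝ (CRaux.dF1 n F W) x) v
  have hconJ : ∀ v W : Cn n,
      (∑ b, v b * CRaux.dF2 n F (Jop n (eC n b)) W x) = CRaux.dF2 n F (Jop n v) W x :=
    fun v W => CRaux.clm_expand_J (fderiv ℝ (CRaux.dF1 n F W) x) v
  have hGG : (∑ b, G b * G b) = CRaux.dF1 n F G x := by
    have h0 : ∀ b, G b * G b = G b * (fderiv ℝ F x) (eC n b) := fun b => by
      rw [show (fderiv ℝ F x) (eC n b) = G b from hGe b]
    rw [Finset.sum_congr rfl fun b _ => h0 b, CRaux.clm_expand (fderiv ℝ F x) G]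
    rfl
  -- smul linearity
  have hdF3s : ∀ (g : Cn n → ℝ) (sc : ℝ) (Z X Y : Cn n),
      CRaux.dF3 n g (sc • Z) X Y x = sc * CRaux.dF3 n g Z X Y x := fun g sc Z X Y => by
    simp only [CRaux.dF3]
    rw [(fderiv ℝ (CRaux.dF2 n g X Y) x).map_smul]
    simp
  have hdF1sG : CRaux.dF1 n F (s • G) x = s * CRaux.dF1 n F G x := by
    simp only [CRaux.dF1]
    rw [(fderiv ℝ F x).map_smul]
    simp
  have hdF2sl : ∀ Y : Cn n, CRaux.dF2 n F (s • G) Y x = s * CRaux.dF2 n F G Y x := fun Y => by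
    simp only [CRaux.dF2]
    rw [(fderiv ℝ (CRaux.dF1 n F Y) x).map_smul]
    simp
  have hdF2ss : CRaux.dF2 n F (s • G) (s • G) x = s * (s * CRaux.dF2 n F G G x) := by
    rw [hdF2sl (s • G), CRaux.dF2_symm hF x G (s • G), hdF2sl G, CRaux.dF2_symm hF x G]
  -- first sum
  have hterm1 : ∀ b, D3C n fl x (s • G) (eC n b) (eC n b)
      = (-2*s*c⁻¹) * CRaux.dF3 n F G (eC n b) (eC n b) x
      + (2*s*c⁻¹*c⁻¹*CRaux.dF1 n F G x) * CRaux.dF2 n F (eC n b) (eC n b) x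
      + (4*s*c⁻¹*c⁻¹) * (G b * CRaux.dF2 n F (eC n b) G x)
      + (-4*s*c⁻¹*c⁻¹*c⁻¹*CRaux.dF1 n F G x) * (G b * G b) := by
    intro b
    rw [CRaux.D3C_eq hfc, hdF3s, hf3'' x G (eC n b) (eC n b), hGe b,
      CRaux.dF2_symm hF x G (eC n b), ← hc]
    ring
  have hS1 : (∑ b, D3C n fl x (s • G) (eC n b) (eC n b))
      = (-2*s*c⁻¹) * (∑ b, CRaux.dF3 n F G (eC n b) (eC n b) x)
      + (2*s*c⁻¹*c⁻¹*CRaux.dF1 n F G x) * (∑ b, CRaux.dF2 n F (eC n b) (eC n b) x)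
      + (4*s*c⁻¹*c⁻¹) * CRaux.dF2 n F G G x
      + (-4*s*c⁻¹*c⁻¹*c⁻¹*CRaux.dF1 n F G x) * CRaux.dF1 n F G x := by
    rw [Finset.sum_congr rfl fun b _ => hterm1 b, Finset.sum_add_distrib,
      Finset.sum_add_distrib, Finset.sum_add_distrib,
      ← Finset.mul_sum, ← Finset.mul_sum, ← Finset.mul_sum, ← Finset.mul_sum,
      hcon G G, hGG]
  -- second sum
  have hterm2 : ∀ b, D3C n fl x (Jop n (s • G)) (eC n b) (Jop n (eC n b))
      = (-2*s*c⁻¹) * CRaux.dF3 n F (Jop n G) (eC n b) (Jop n (eC n b)) x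
      + (-2*s*c⁻¹*c⁻¹) * ((Jop n G) b * CRaux.dF2 n F (eC n b) (Jop n G) x)
      + (2*s*c⁻¹*c⁻¹) * (G b * CRaux.dF2 n F (Jop n (eC n b)) (Jop n G) x) := by
    intro b
    rw [CRaux.D3C_eq hfc, CRaux.Jop_smul, hdF3s,
      hf3'' x (Jop n G) (eC n b) (Jop n (eC n b)), hGJG, hGe b, hGJe b,
      CRaux.dF2_symm hF x (Jop n G) (eC n b),
      CRaux.dF2_symm hF x (Jop n G) (Jop n (eC n b)), ← hc]
    ring
  have hS2 : (∑ b, D3C n fl x (Jop n (s • G)) (eC n b) (Jop n (eC n b)))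
      = (-2*s*c⁻¹) * (∑ b, CRaux.dF3 n F (Jop n G) (eC n b) (Jop n (eC n b)) x)
      + (-2*s*c⁻¹*c⁻¹) * CRaux.dF2 n F (Jop n G) (Jop n G) x
      + (2*s*c⁻¹*c⁻¹) * CRaux.dF2 n F (Jop n G) (Jop n G) x := by
    rw [Finset.sum_congr rfl fun b _ => hterm2 b, Finset.sum_add_distrib,
      Finset.sum_add_distrib, ← Finset.mul_sum, ← Finset.mul_sum, ← Finset.mul_sum,
      hcon (Jop n G) (Jop n G), hconJ G (Jop n G)]
  -- RHS pieces
  have hPCF : PC n F x G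
      = (∑ b, CRaux.dF3 n F G (eC n b) (eC n b) x)
        + (∑ b, CRaux.dF3 n F (Jop n G) (eC n b) (Jop n (eC n b)) x) := by
    rw [PC]
    congr 1
    · exact Finset.sum_congr rfl fun b _ => CRaux.D3C_eq hF x G (eC n b) (eC n b)
    · exact Finset.sum_congr rfl fun b _ => CRaux.D3C_eq hF x (Jop n G) (eC n b) (Jop n (eC n b))
  have hlapf : lapC n fl x
      = (-2*c⁻¹) * (∑ b, CRaux.dF2 n F (eC n b) (eC n b) x)
        + (2*c⁻¹*c⁻¹) * CRaux.dF1 n F G x := by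
    rw [lapC]
    have ht : ∀ b, D2C n fl x (eC n b) (eC n b)
        = (-2*c⁻¹) * CRaux.dF2 n F (eC n b) (eC n b) x + (2*c⁻¹*c⁻¹) * (G b * G b) := fun b => by
      rw [CRaux.D2C_eq hfc, hf2'' x (eC n b) (eC n b), hGe b, ← hc]
      ring
    rw [Finset.sum_congr rfl fun b _ => ht b, Finset.sum_add_distrib,
      ← Finset.mul_sum, ← Finset.mul_sum, hGG]
  have hD2f : D2C n fl x (s • G) (s • G)
      = -2 * (c⁻¹ * (s * (s * CRaux.dF2 n F G G x)))
        + 2 * (c⁻¹ * c⁻¹ * ((s * CRaux.dF1 n F G x) * (s * CRaux.dF1 n F G x))) := by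
    rw [CRaux.D2C_eq hfc, hf2'' x (s • G) (s • G), hdF2ss, hdF1sG, ← hc]
  have hnrm2 : ‖s • G‖^2 = s * (s * CRaux.dF1 n F G x) := by
    rw [← real_inner_self_eq_norm_sq, real_inner_smul_left, real_inner_smul_right, ← hG1 G]
  have hnrm4 : ‖s • G‖^4 = (s * (s * CRaux.dF1 n F G x))^2 := by
    rw [show (4:ℕ) = 2*2 from rfl, pow_mul, hnrm2]
  -- assemble
  rw [show PC n fl x (gradient fl x)
      = (∑ b, D3C n fl x (s • G) (eC n b) (eC n b))
        + (∑ b, D3C n fl x (Jop n (s • G)) (eC n b) (Jop n (eC n b))) from by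
    rw [PC, hgradf]]
  rw [hS1, hS2, hgradf, hPCF, hlapf, hD2f, hnrm4, hnrm2, hs]
  field_simp
  ring
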